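/- Let X be a complex normed space (not assumed complete) and let T1, T2 be commuting contractions on X (norms are allowed to equal 1) such that each function A_{Ti}(x) = (‖x‖² − ‖Ti x‖²)^{1/2} defines a norm on X (i = 1, 2). Let X1 and X2 be complex normed spaces together with linear bijections j_i : X → X_i satisfying ‖j_i x‖_{X_i} = A_{Ti}(x) for all x ∈ X. Suppose there is a surjective linear isometry S on X1 ⊕₂ X2 satisfying S(j_1(T2 x), j_2 x) = (j_1 x, j_2(T1 x)) for all x ∈ X. Then there exist commuting isometries V1, V2 on the normed space W = X ⊕₂ ℓ²(ℕ, X1 ⊕₂ X2) such that for all nonnegative integers n1, n2 and all x ∈ X, the first coordinate of V1^{n1} V2^{n2}(x, 0) equals T1^{n1} T2^{n2} x; that is, (T1, T2) dilates to a commuting pair of isometries on a normed linear space. -/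

import Mathlib

set_option linter.unusedSectionVars false
set_option maxHeartbeats 1000000

namespace AndoAux
open scoped ENNReal
variable {K : Type*} [NormedAddCommGroup K] [NormedSpace ℂ K]

lemma rpow_toReal_two (r : ℝ) : r ^ (2 : ℝ≥0∞).toReal = r ^ 2 := by
  rw [show (2 : ℝ≥0∞).toReal = ((2 : ℕ) : ℝ) by norm_num, Real.rpow_natCast]

lemma memℓp_two_iff {f : ℕ → K} :
    Memℓp f 2 ↔ Summable fun n => ‖f n‖ ^ 2 := by
  rw [memℓp_gen_iff (by norm_num : 0 < (2 : ℝ≥0∞).toReal)]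
  simp_rw [rpow_toReal_two]

lemma lp_norm_sq (f : lp (fun _ : ℕ => K) 2) : ‖f‖ ^ 2 = ∑' n, ‖f n‖ ^ 2 := by
  have h := lp.norm_rpow_eq_tsum (p := 2) (by norm_num) f
  simp_rw [rpow_toReal_two] at h
  exact h

lemma norm_eq_of_sq_eq {a b : ℝ} (ha : 0 ≤ a) (hb : 0 ≤ b) (h : a ^ 2 = b ^ 2) : a = b := by
  rw [← Real.sqrt_sq ha, h, Real.sqrt_sq hb]

def consF (k : K) (f : ℕ → K) : ℕ → K
  | 0 => k
  | n + 1 => f n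

@[simp] lemma consF_zero (k : K) (f : ℕ → K) : consF k f 0 = k := rfl
@[simp] lemma consF_succ (k : K) (f : ℕ → K) (n : ℕ) : consF k f (n + 1) = f n := rfl

lemma summable_consF (k : K) {f : ℕ → K} (hf : Summable fun n => ‖f n‖ ^ 2) :
    Summable fun n => ‖consF k f n‖ ^ 2 :=
  (summable_nat_add_iff 1).mp (by simpa using hf)

lemma tsum_consF (k : K) {f : ℕ → K} (hf : Summable fun n => ‖f n‖ ^ 2) :
    ∑' n, ‖consF k f n‖ ^ 2 = ‖k‖ ^ 2 + ∑' n, ‖f n‖ ^ 2 := by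
  rw [Summable.tsum_eq_zero_add (summable_consF k hf)]
  simp

def consLp (k : K) (f : lp (fun _ : ℕ => K) 2) : lp (fun _ : ℕ => K) 2 :=
  ⟨consF k ⇑f, memℓp_two_iff.2 (summable_consF k (memℓp_two_iff.1 (lp.memℓp f)))⟩

@[simp] lemma consLp_coe (k : K) (f : lp (fun _ : ℕ => K) 2) :
    ⇑(consLp k f) = consF k ⇑f := rfl

lemma consLp_add (k k' : K) (f f' : lp (fun _ : ℕ => K) 2) :
    consLp (k + k') (f + f') = consLp k f + consLp k' f' := by
  apply lp.ext
  rw [lp.coeFn_add, consLp_coe, consLp_coe, consLp_coe, lp.coeFn_add]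
  funext n; cases n <;> rfl

lemma consLp_smul (c : ℂ) (k : K) (f : lp (fun _ : ℕ => K) 2) :
    consLp (c • k) (c • f) = c • consLp k f := by
  apply lp.ext
  rw [lp.coeFn_smul, consLp_coe, consLp_coe, lp.coeFn_smul]
  funext n; cases n <;> rfl

lemma consLp_norm_sq (k : K) (f : lp (fun _ : ℕ => K) 2) :
    ‖consLp k f‖ ^ 2 = ‖k‖ ^ 2 + ‖f‖ ^ 2 := by
  rw [lp_norm_sq, lp_norm_sq]
  simp only [consLp_coe]
  exact tsum_consF k (memℓp_two_iff.1 (lp.memℓp f))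
def gF (Φ1 Φ2 : K → K → K) (f : ℕ → K) (n : ℕ) : K :=
  if n % 2 = 0 then Φ1 (f (2 * (n / 2))) (f (2 * (n / 2) + 1))
  else Φ2 (f (2 * (n / 2))) (f (2 * (n / 2) + 1))
variable (Φ1 Φ2 Φ1' Φ2' : K → K → K)
lemma gF_even (f : ℕ → K) (m : ℕ) :
    gF Φ1 Φ2 f (2 * m) = Φ1 (f (2 * m)) (f (2 * m + 1)) := by
  have h1 : 2 * m % 2 = 0 := by omega
  have h2 : 2 * (2 * m / 2) = 2 * m := by omega
  simp [gF, h1, h2]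
lemma gF_odd (f : ℕ → K) (m : ℕ) :
    gF Φ1 Φ2 f (2 * m + 1) = Φ2 (f (2 * m)) (f (2 * m + 1)) := by
  have h1 : (2 * m + 1) % 2 = 1 := by omega
  have h2 : 2 * ((2 * m + 1) / 2) = 2 * m := by omega
  simp [gF, h1, h2]
variable (hΦn : ∀ a b : K, ‖Φ1 a b‖ ^ 2 + ‖Φ2 a b‖ ^ 2 = ‖a‖ ^ 2 + ‖b‖ ^ 2)
include hΦn
lemma summable_gF {f : ℕ → K} (hf : Summable fun n => ‖f n‖ ^ 2) :
    Summable fun n => ‖gF Φ1 Φ2 f n‖ ^ 2 := by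
  have he' : Summable fun m => ‖f (2 * m)‖ ^ 2 :=
    hf.comp_injective (fun a b h => by omega)
  have ho' : Summable fun m => ‖f (2 * m + 1)‖ ^ 2 :=
    hf.comp_injective (fun a b h => by omega)
  have hsum : Summable fun m => ‖f (2 * m)‖ ^ 2 + ‖f (2 * m + 1)‖ ^ 2 := he'.add ho'
  have he : Summable fun m => ‖gF Φ1 Φ2 f (2 * m)‖ ^ 2 := by
    refine Summable.of_nonneg_of_le (fun m => sq_nonneg _) (fun m => ?_) hsum
    rw [gF_even]
    nlinarith [hΦn (f (2 * m)) (f (2 * m + 1)), sq_nonneg ‖Φ2 (f (2 * m)) (f (2 * m + 1))‖]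
  have ho : Summable fun m => ‖gF Φ1 Φ2 f (2 * m + 1)‖ ^ 2 := by
    refine Summable.of_nonneg_of_le (fun m => sq_nonneg _) (fun m => ?_) hsum
    rw [gF_odd]
    nlinarith [hΦn (f (2 * m)) (f (2 * m + 1)), sq_nonneg ‖Φ1 (f (2 * m)) (f (2 * m + 1))‖]
  exact he.even_add_odd ho
lemma tsum_gF {f : ℕ → K} (hf : Summable fun n => ‖f n‖ ^ 2) :
    ∑' n, ‖gF Φ1 Φ2 f n‖ ^ 2 = ∑' n, ‖f n‖ ^ 2 := by
  have hg := summable_gF Φ1 Φ2 hΦn hf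
  have hge : Summable fun m => ‖gF Φ1 Φ2 f (2 * m)‖ ^ 2 :=
    hg.comp_injective (fun a b h => by omega)
  have hgo : Summable fun m => ‖gF Φ1 Φ2 f (2 * m + 1)‖ ^ 2 :=
    hg.comp_injective (fun a b h => by omega)
  have h1 : (∑' m, ‖gF Φ1 Φ2 f (2 * m)‖ ^ 2) + ∑' m, ‖gF Φ1 Φ2 f (2 * m + 1)‖ ^ 2
      = ∑' n, ‖gF Φ1 Φ2 f n‖ ^ 2 := tsum_even_add_odd (f := fun n => ‖gF Φ1 Φ2 f n‖ ^ 2) hge hgo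
  have he' : Summable fun m => ‖f (2 * m)‖ ^ 2 :=
    hf.comp_injective (fun a b h => by omega)
  have ho' : Summable fun m => ‖f (2 * m + 1)‖ ^ 2 :=
    hf.comp_injective (fun a b h => by omega)
  have h2 : (∑' m, ‖f (2 * m)‖ ^ 2) + ∑' m, ‖f (2 * m + 1)‖ ^ 2
      = ∑' n, ‖f n‖ ^ 2 := tsum_even_add_odd (f := fun n => ‖f n‖ ^ 2) he' ho'
  rw [← h1, ← h2, ← Summable.tsum_add hge hgo, ← Summable.tsum_add he' ho']
  exact tsum_congr fun m => by rw [gF_even, gF_odd]; exact hΦn _ _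

omit hΦn

lemma gF_add
    (hΦ1add : ∀ a b a' b' : K, Φ1 (a + a') (b + b') = Φ1 a b + Φ1 a' b')
    (hΦ2add : ∀ a b a' b' : K, Φ2 (a + a') (b + b') = Φ2 a b + Φ2 a' b') (f f' : ℕ → K) :
    gF Φ1 Φ2 (f + f') = gF Φ1 Φ2 f + gF Φ1 Φ2 f' := by
  funext n
  simp only [gF, Pi.add_apply]
  split <;> simp [hΦ1add, hΦ2add]

lemma gF_smul
    (hΦ1smul : ∀ (c : ℂ) (a b : K), Φ1 (c • a) (c • b) = c • Φ1 a b)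
    (hΦ2smul : ∀ (c : ℂ) (a b : K), Φ2 (c • a) (c • b) = c • Φ2 a b) (c : ℂ) (f : ℕ → K) :
    gF Φ1 Φ2 (c • f) = c • gF Φ1 Φ2 f := by
  funext n
  simp only [gF, Pi.smul_apply]
  split <;> simp [hΦ1smul, hΦ2smul]
lemma gF_consF_consF (a b : K) (f : ℕ → K) :
    gF Φ1 Φ2 (consF a (consF b f))
      = consF (Φ1 a b) (consF (Φ2 a b) (gF Φ1 Φ2 f)) := by
  funext n
  match n with
  | 0 => rfl
  | 1 => rfl
  | (n + 2) =>
    show gF Φ1 Φ2 (consF a (consF b f)) (n + 2) = gF Φ1 Φ2 f n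
    have e1 : (n + 2) % 2 = n % 2 := by omega
    have e2 : 2 * ((n + 2) / 2) = 2 * (n / 2) + 2 := by omega
    simp only [gF, e1, e2]
    rfl

lemma gF_gF (hinv1 : ∀ a b : K, Φ1' (Φ1 a b) (Φ2 a b) = a)
    (hinv2 : ∀ a b : K, Φ2' (Φ1 a b) (Φ2 a b) = b) (f : ℕ → K) :
    gF Φ1' Φ2' (gF Φ1 Φ2 f) = f := by
  funext n
  rcases (by omega : n = 2 * (n / 2) ∨ n = 2 * (n / 2) + 1) with h | h <;> rw [h]
  · show gF Φ1' Φ2' (gF Φ1 Φ2 f) (2 * (n/2)) = _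
    have e0 : 2 * (n/2) % 2 = 0 := by omega
    have e2 : 2 * ((2 * (n/2)) / 2) = 2 * (n/2) := by omega
    have e3 : 2 * ((2 * (n/2) + 1) / 2) = 2 * (n/2) := by omega
    have e4 : (2 * (n/2) + 1) % 2 = 1 := by omega
    simp only [gF, e0, e2, e3, e4, if_pos rfl, if_true, reduceIte]
    simp [hinv1]
  · have e0 : (2 * (n/2) + 1) % 2 = 1 := by omega
    have e2 : 2 * ((2 * (n/2)) / 2) = 2 * (n/2) := by omega
    have e3 : 2 * ((2 * (n/2) + 1) / 2) = 2 * (n/2) := by omega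
    have e4 : 2 * (n/2) % 2 = 0 := by omega
    simp only [gF, e0, e2, e3, e4, reduceIte]
    simp [hinv2]

def gLp (Φ1 Φ2 : K → K → K)
    (hΦn : ∀ a b : K, ‖Φ1 a b‖ ^ 2 + ‖Φ2 a b‖ ^ 2 = ‖a‖ ^ 2 + ‖b‖ ^ 2)
    (f : lp (fun _ : ℕ => K) 2) : lp (fun _ : ℕ => K) 2 :=
  ⟨gF Φ1 Φ2 ⇑f, memℓp_two_iff.2 (summable_gF Φ1 Φ2 hΦn (memℓp_two_iff.1 (lp.memℓp f)))⟩

@[simp] lemma gLp_coe (Φ1 Φ2 hΦn) (f : lp (fun _ : ℕ => K) 2) :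
    ⇑(gLp Φ1 Φ2 hΦn f) = gF Φ1 Φ2 ⇑f := rfl

lemma gLp_add (Φ1 Φ2 hΦn)
    (hΦ1add : ∀ a b a' b' : K, Φ1 (a + a') (b + b') = Φ1 a b + Φ1 a' b')
    (hΦ2add : ∀ a b a' b' : K, Φ2 (a + a') (b + b') = Φ2 a b + Φ2 a' b')
    (f f' : lp (fun _ : ℕ => K) 2) :
    gLp Φ1 Φ2 hΦn (f + f') = gLp Φ1 Φ2 hΦn f + gLp Φ1 Φ2 hΦn f' := by
  apply lp.ext
  rw [lp.coeFn_add, gLp_coe, gLp_coe, gLp_coe, lp.coeFn_add,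
    gF_add Φ1 Φ2 hΦ1add hΦ2add]

lemma gLp_smul (Φ1 Φ2 hΦn)
    (hΦ1smul : ∀ (c : ℂ) (a b : K), Φ1 (c • a) (c • b) = c • Φ1 a b)
    (hΦ2smul : ∀ (c : ℂ) (a b : K), Φ2 (c • a) (c • b) = c • Φ2 a b)
    (c : ℂ) (f : lp (fun _ : ℕ => K) 2) :
    gLp Φ1 Φ2 hΦn (c • f) = c • gLp Φ1 Φ2 hΦn f := by
  apply lp.ext
  rw [lp.coeFn_smul, gLp_coe, gLp_coe, lp.coeFn_smul,
    gF_smul Φ1 Φ2 hΦ1smul hΦ2smul]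

lemma gLp_norm_sq (Φ1 Φ2 hΦn) (f : lp (fun _ : ℕ => K) 2) :
    ‖gLp Φ1 Φ2 hΦn f‖ ^ 2 = ‖f‖ ^ 2 := by
  rw [lp_norm_sq, lp_norm_sq]
  simp only [gLp_coe]
  exact tsum_gF Φ1 Φ2 hΦn (memℓp_two_iff.1 (lp.memℓp f))

lemma gLp_gLp (Φ1 Φ2 Φ1' Φ2' hΦn hΦ'n)
    (hinv1 : ∀ a b : K, Φ1' (Φ1 a b) (Φ2 a b) = a)
    (hinv2 : ∀ a b : K, Φ2' (Φ1 a b) (Φ2 a b) = b)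
    (f : lp (fun _ : ℕ => K) 2) :
    gLp Φ1' Φ2' hΦ'n (gLp Φ1 Φ2 hΦn f) = f := by
  apply lp.ext
  rw [gLp_coe, gLp_coe]
  exact gF_gF Φ1 Φ2 Φ1' Φ2' hinv1 hinv2 ⇑f

lemma gLp_consF_consF (Φ1 Φ2 hΦn) (a b : K) (f : lp (fun _ : ℕ => K) 2) :
    gLp Φ1 Φ2 hΦn (consLp a (consLp b f))
      = consLp (Φ1 a b) (consLp (Φ2 a b) (gLp Φ1 Φ2 hΦn f)) := by
  apply lp.ext
  simp only [gLp_coe, consLp_coe]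
  exact gF_consF_consF Φ1 Φ2 a b ⇑f



section Wlevel

variable (X : Type*) [NormedAddCommGroup X] [NormedSpace ℂ X]

noncomputable def shiftCLM (T : X →L[ℂ] X) (E : X → K)
    (hEadd : ∀ x y, E (x + y) = E x + E y)
    (hEsmul : ∀ (c : ℂ) (x : X), E (c • x) = c • E x)
    (hEn : ∀ x, ‖E x‖ ^ 2 = ‖x‖ ^ 2 - ‖T x‖ ^ 2) :
    WithLp 2 (X × lp (fun _ : ℕ => K) 2) →L[ℂ] WithLp 2 (X × lp (fun _ : ℕ => K) 2) :=
  LinearMap.mkContinuous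
    { toFun := fun w => WithLp.toLp 2 (T w.fst, consLp (E w.fst) w.snd)
      map_add' := fun u v => by
        show WithLp.toLp 2 (T (u.fst + v.fst), consLp (E (u.fst + v.fst)) (u.snd + v.snd)) = _
        rw [map_add, hEadd, consLp_add]
        rfl
      map_smul' := fun c u => by
        show WithLp.toLp 2 (T (c • u.fst), consLp (E (c • u.fst)) (c • u.snd)) = _
        rw [map_smul, hEsmul, consLp_smul]
        rfl }
    1 (fun w => by
      rw [one_mul]
      apply le_of_eq
      apply norm_eq_of_sq_eq (norm_nonneg _) (norm_nonneg _)
      rw [WithLp.prod_norm_sq_eq_of_L2, WithLp.prod_norm_sq_eq_of_L2 w]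
      show ‖T w.fst‖ ^ 2 + ‖consLp (E w.fst) w.snd‖ ^ 2 = ‖w.fst‖ ^ 2 + ‖w.snd‖ ^ 2
      rw [consLp_norm_sq, hEn]
      ring)

@[simp] lemma shiftCLM_apply (T : X →L[ℂ] X) (E : X → K) (hEadd hEsmul hEn)
    (w : WithLp 2 (X × lp (fun _ : ℕ => K) 2)) :
    shiftCLM X T E hEadd hEsmul hEn w = WithLp.toLp 2 (T w.fst, consLp (E w.fst) w.snd) := rfl

lemma shiftCLM_norm (T : X →L[ℂ] X) (E : X → K) (hEadd hEsmul hEn)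
    (w : WithLp 2 (X × lp (fun _ : ℕ => K) 2)) :
    ‖shiftCLM X T E hEadd hEsmul hEn w‖ = ‖w‖ := by
  apply norm_eq_of_sq_eq (norm_nonneg _) (norm_nonneg _)
  rw [WithLp.prod_norm_sq_eq_of_L2, WithLp.prod_norm_sq_eq_of_L2 w]
  show ‖T w.fst‖ ^ 2 + ‖consLp (E w.fst) w.snd‖ ^ 2 = ‖w.fst‖ ^ 2 + ‖w.snd‖ ^ 2
  rw [consLp_norm_sq, hEn]
  ring

noncomputable def gCLM (Φ1 Φ2 : K → K → K)
    (hΦ1add : ∀ a b a' b' : K, Φ1 (a + a') (b + b') = Φ1 a b + Φ1 a' b')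
    (hΦ2add : ∀ a b a' b' : K, Φ2 (a + a') (b + b') = Φ2 a b + Φ2 a' b')
    (hΦ1smul : ∀ (c : ℂ) (a b : K), Φ1 (c • a) (c • b) = c • Φ1 a b)
    (hΦ2smul : ∀ (c : ℂ) (a b : K), Φ2 (c • a) (c • b) = c • Φ2 a b)
    (hΦn : ∀ a b : K, ‖Φ1 a b‖ ^ 2 + ‖Φ2 a b‖ ^ 2 = ‖a‖ ^ 2 + ‖b‖ ^ 2) :
    WithLp 2 (X × lp (fun _ : ℕ => K) 2) →L[ℂ] WithLp 2 (X × lp (fun _ : ℕ => K) 2) :=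
  LinearMap.mkContinuous
    { toFun := fun w => WithLp.toLp 2 (w.fst, gLp Φ1 Φ2 hΦn w.snd)
      map_add' := fun u v => by
        show WithLp.toLp 2 (u.fst + v.fst, gLp Φ1 Φ2 hΦn (u.snd + v.snd)) = _
        rw [gLp_add Φ1 Φ2 hΦn hΦ1add hΦ2add]
        rfl
      map_smul' := fun c u => by
        show WithLp.toLp 2 (c • u.fst, gLp Φ1 Φ2 hΦn (c • u.snd)) = _
        rw [gLp_smul Φ1 Φ2 hΦn hΦ1smul hΦ2smul]
        rfl }
    1 (fun w => by
      rw [one_mul]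
      apply le_of_eq
      apply norm_eq_of_sq_eq (norm_nonneg _) (norm_nonneg _)
      rw [WithLp.prod_norm_sq_eq_of_L2, WithLp.prod_norm_sq_eq_of_L2 w]
      show ‖w.fst‖ ^ 2 + ‖gLp Φ1 Φ2 hΦn w.snd‖ ^ 2 = ‖w.fst‖ ^ 2 + ‖w.snd‖ ^ 2
      rw [gLp_norm_sq])

@[simp] lemma gCLM_apply (Φ1 Φ2 : K → K → K) (hΦ1add hΦ2add hΦ1smul hΦ2smul hΦn)
    (w : WithLp 2 (X × lp (fun _ : ℕ => K) 2)) :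
    gCLM X Φ1 Φ2 hΦ1add hΦ2add hΦ1smul hΦ2smul hΦn w = WithLp.toLp 2 (w.fst, gLp Φ1 Φ2 hΦn w.snd) := rfl

lemma gCLM_norm (Φ1 Φ2 : K → K → K) (hΦ1add hΦ2add hΦ1smul hΦ2smul hΦn)
    (w : WithLp 2 (X × lp (fun _ : ℕ => K) 2)) :
    ‖gCLM X Φ1 Φ2 hΦ1add hΦ2add hΦ1smul hΦ2smul hΦn w‖ = ‖w‖ := by
  apply norm_eq_of_sq_eq (norm_nonneg _) (norm_nonneg _)
  rw [WithLp.prod_norm_sq_eq_of_L2, WithLp.prod_norm_sq_eq_of_L2 w]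
  show ‖w.fst‖ ^ 2 + ‖gLp Φ1 Φ2 hΦn w.snd‖ ^ 2 = ‖w.fst‖ ^ 2 + ‖w.snd‖ ^ 2
  rw [gLp_norm_sq]

end Wlevel

theorem ando_aux
    (X : Type*) [NormedAddCommGroup X] [NormedSpace ℂ X]
    (T1 T2 : X →L[ℂ] X) (hc : ∀ x, T1 (T2 x) = T2 (T1 x))
    (E1 E2 : X → K)
    (hE1add : ∀ x y, E1 (x + y) = E1 x + E1 y)
    (hE1smul : ∀ (c : ℂ) (x : X), E1 (c • x) = c • E1 x)
    (hE2add : ∀ x y, E2 (x + y) = E2 x + E2 y)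
    (hE2smul : ∀ (c : ℂ) (x : X), E2 (c • x) = c • E2 x)
    (hE1n : ∀ x, ‖E1 x‖ ^ 2 = ‖x‖ ^ 2 - ‖T1 x‖ ^ 2)
    (hE2n : ∀ x, ‖E2 x‖ ^ 2 = ‖x‖ ^ 2 - ‖T2 x‖ ^ 2)
    (Φ1 Φ2 Φ1' Φ2' : K → K → K)
    (hΦ1add : ∀ a b a' b' : K, Φ1 (a + a') (b + b') = Φ1 a b + Φ1 a' b')
    (hΦ2add : ∀ a b a' b' : K, Φ2 (a + a') (b + b') = Φ2 a b + Φ2 a' b')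
    (hΦ1smul : ∀ (c : ℂ) (a b : K), Φ1 (c • a) (c • b) = c • Φ1 a b)
    (hΦ2smul : ∀ (c : ℂ) (a b : K), Φ2 (c • a) (c • b) = c • Φ2 a b)
    (hΦ1'add : ∀ a b a' b' : K, Φ1' (a + a') (b + b') = Φ1' a b + Φ1' a' b')
    (hΦ2'add : ∀ a b a' b' : K, Φ2' (a + a') (b + b') = Φ2' a b + Φ2' a' b')
    (hΦ1'smul : ∀ (c : ℂ) (a b : K), Φ1' (c • a) (c • b) = c • Φ1' a b)
    (hΦ2'smul : ∀ (c : ℂ) (a b : K), Φ2' (c • a) (c • b) = c • Φ2' a b)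
    (hΦn : ∀ a b : K, ‖Φ1 a b‖ ^ 2 + ‖Φ2 a b‖ ^ 2 = ‖a‖ ^ 2 + ‖b‖ ^ 2)
    (hΦ'n : ∀ a b : K, ‖Φ1' a b‖ ^ 2 + ‖Φ2' a b‖ ^ 2 = ‖a‖ ^ 2 + ‖b‖ ^ 2)
    (hinv1 : ∀ a b : K, Φ1' (Φ1 a b) (Φ2 a b) = a)
    (hinv2 : ∀ a b : K, Φ2' (Φ1 a b) (Φ2 a b) = b)
    (hinv1' : ∀ a b : K, Φ1 (Φ1' a b) (Φ2' a b) = a)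
    (hinv2' : ∀ a b : K, Φ2 (Φ1' a b) (Φ2' a b) = b)
    (hkey1 : ∀ x, Φ1 (E1 (T2 x)) (E2 x) = E2 (T1 x))
    (hkey2 : ∀ x, Φ2 (E1 (T2 x)) (E2 x) = E1 x) :
    ∃ V1 V2 : WithLp 2 (X × lp (fun _ : ℕ => K) 2) →L[ℂ]
        WithLp 2 (X × lp (fun _ : ℕ => K) 2),
      (∀ w, ‖V1 w‖ = ‖w‖) ∧ (∀ w, ‖V2 w‖ = ‖w‖) ∧
      V1 ∘L V2 = V2 ∘L V1 ∧
      (∀ (n1 n2 : ℕ) (x : X),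
        (WithLp.ofLp (((V1 ^ n1) * (V2 ^ n2))
            (WithLp.toLp 2 (x, 0) : WithLp 2 (X × lp (fun _ : ℕ => K) 2)))).1
          = ((T1 ^ n1) * (T2 ^ n2)) x) := by
  set W1 := shiftCLM X T1 E1 hE1add hE1smul hE1n with hW1
  set W2 := shiftCLM X T2 E2 hE2add hE2smul hE2n with hW2
  set G := gCLM X Φ1 Φ2 hΦ1add hΦ2add hΦ1smul hΦ2smul hΦn with hG
  set G' := gCLM X Φ1' Φ2' hΦ1'add hΦ2'add hΦ1'smul hΦ2'smul hΦ'n with hG'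
  have hGG' : ∀ w, G (G' w) = w := by
    intro w
    show (WithLp.toLp 2 (w.fst, gLp Φ1 Φ2 hΦn (gLp Φ1' Φ2' hΦ'n w.snd)) :
      WithLp 2 (X × lp (fun _ : ℕ => K) 2)) = w
    rw [gLp_gLp Φ1' Φ2' Φ1 Φ2 hΦ'n hΦn hinv1' hinv2']
    rfl
  have hG'G : ∀ w, G' (G w) = w := by
    intro w
    show (WithLp.toLp 2 (w.fst, gLp Φ1' Φ2' hΦ'n (gLp Φ1 Φ2 hΦn w.snd)) :
      WithLp 2 (X × lp (fun _ : ℕ => K) 2)) = w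
    rw [gLp_gLp Φ1 Φ2 Φ1' Φ2' hΦn hΦ'n hinv1 hinv2]
    rfl
  have hstar : ∀ w, G (W1 (W2 w)) = W2 (W1 (G w)) := by
    intro w
    show (WithLp.toLp 2 (T1 (T2 w.fst), gLp Φ1 Φ2 hΦn (consLp (E1 (T2 w.fst)) (consLp (E2 w.fst) w.snd))) :
        WithLp 2 (X × lp (fun _ : ℕ => K) 2))
      = WithLp.toLp 2 (T2 (T1 w.fst), consLp (E2 (T1 w.fst)) (consLp (E1 w.fst) (gLp Φ1 Φ2 hΦn w.snd)))
    rw [gLp_consF_consF, hkey1, hkey2, hc]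
  refine ⟨W1.comp G, G'.comp W2, ?_, ?_, ?_, ?_⟩
  · intro w
    rw [ContinuousLinearMap.comp_apply, shiftCLM_norm, gCLM_norm]
  · intro w
    rw [ContinuousLinearMap.comp_apply, gCLM_norm, shiftCLM_norm]
  · apply ContinuousLinearMap.ext
    intro w
    show W1 (G (G' (W2 w))) = G' (W2 (W1 (G w)))
    rw [hGG', ← hstar, hG'G]
  · intro n1 n2 x
    have h1 : ∀ w, ((W1.comp G) w).fst = T1 w.fst := fun w => rfl
    have h2 : ∀ w, ((G'.comp W2) w).fst = T2 w.fst := fun w => rfl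
    have hpow : ∀ (V : WithLp 2 (X × lp (fun _ : ℕ => K) 2) →L[ℂ]
          WithLp 2 (X × lp (fun _ : ℕ => K) 2)) (T : X →L[ℂ] X),
        (∀ w, (V w).fst = T w.fst) → ∀ (n : ℕ) w, ((V ^ n) w).fst = (T ^ n) w.fst := by
      intro V T hV n
      induction n with
      | zero => intro w; simp
      | succ n ih =>
        intro w
        rw [pow_succ, pow_succ, ContinuousLinearMap.mul_apply,
          ContinuousLinearMap.mul_apply, ih (V w), hV w]
    calc (WithLp.ofLp (((W1.comp G) ^ n1 * (G'.comp W2) ^ n2)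
            (WithLp.toLp 2 (x, 0) : WithLp 2 (X × lp (fun _ : ℕ => K) 2)))).1
        = (((W1.comp G) ^ n1) (((G'.comp W2) ^ n2) (WithLp.toLp 2 (x, 0)))).fst := rfl
      _ = (T1 ^ n1) ((((G'.comp W2) ^ n2) (WithLp.toLp 2 (x, 0) :
            WithLp 2 (X × lp (fun _ : ℕ => K) 2))).fst) := hpow _ _ h1 n1 _
      _ = (T1 ^ n1) ((T2 ^ n2) x) := by rw [hpow _ _ h2 n2, WithLp.toLp_fst]
      _ = ((T1 ^ n1) * (T2 ^ n2)) x := rfl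

end AndoAux



/-- (Part of Theorem 3.1). Let `(T1, T2)` be a commuting pair of contractions on a
complex normed space `X` (not assumed complete, norms allowed to equal 1) such that
`A_{Ti}(x) = (‖x‖² - ‖Ti x‖²)^{1/2}` defines a norm on `X` for `i = 1, 2`, realized by
normed spaces `Xi` via linear bijections `ji`. If there is a surjective linear isometry
`S` on `X1 ⊕₂ X2` with `S (j1 (T2 x), j2 x) = (j1 x, j2 (T1 x))` for all `x`, then
`(T1, T2)` dilates to a commuting pair of isometries on `X ⊕₂ ℓ²(ℕ, X1 ⊕₂ X2)`. -/
theorem normed_space_ando_isometric_dilation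
    (X : Type*) [NormedAddCommGroup X] [NormedSpace ℂ X]
    (T1 T2 : X →L[ℂ] X) (hcomm : T1 ∘L T2 = T2 ∘L T1)
    (hT1 : ‖T1‖ ≤ 1) (hT2 : ‖T2‖ ≤ 1)
    (hdef1 : ∀ x : X, Real.sqrt (‖x‖ ^ 2 - ‖T1 x‖ ^ 2) = 0 → x = 0)
    (hdef2 : ∀ x : X, Real.sqrt (‖x‖ ^ 2 - ‖T2 x‖ ^ 2) = 0 → x = 0)
    (htri1 : ∀ x y : X,
      Real.sqrt (‖x + y‖ ^ 2 - ‖T1 (x + y)‖ ^ 2)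
        ≤ Real.sqrt (‖x‖ ^ 2 - ‖T1 x‖ ^ 2) + Real.sqrt (‖y‖ ^ 2 - ‖T1 y‖ ^ 2))
    (htri2 : ∀ x y : X,
      Real.sqrt (‖x + y‖ ^ 2 - ‖T2 (x + y)‖ ^ 2)
        ≤ Real.sqrt (‖x‖ ^ 2 - ‖T2 x‖ ^ 2) + Real.sqrt (‖y‖ ^ 2 - ‖T2 y‖ ^ 2))
    (X1 X2 : Type*) [NormedAddCommGroup X1] [NormedSpace ℂ X1]
    [NormedAddCommGroup X2] [NormedSpace ℂ X2]
    (j1 : X ≃ₗ[ℂ] X1) (j2 : X ≃ₗ[ℂ] X2)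
    (hj1 : ∀ x : X, ‖j1 x‖ = Real.sqrt (‖x‖ ^ 2 - ‖T1 x‖ ^ 2))
    (hj2 : ∀ x : X, ‖j2 x‖ = Real.sqrt (‖x‖ ^ 2 - ‖T2 x‖ ^ 2))
    (S : WithLp 2 (X1 × X2) ≃ₗᵢ[ℂ] WithLp 2 (X1 × X2))
    (hS : ∀ x : X,
      S (WithLp.toLp 2 (j1 (T2 x), j2 x) : WithLp 2 (X1 × X2))
        = (WithLp.toLp 2 (j1 x, j2 (T1 x)) : WithLp 2 (X1 × X2))) :
    ∃ V1 V2 : WithLp 2 (X × lp (fun _ : ℕ => WithLp 2 (X1 × X2)) 2) →L[ℂ]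
        WithLp 2 (X × lp (fun _ : ℕ => WithLp 2 (X1 × X2)) 2),
      (∀ w, ‖V1 w‖ = ‖w‖) ∧ (∀ w, ‖V2 w‖ = ‖w‖) ∧
      V1 ∘L V2 = V2 ∘L V1 ∧
      (∀ (n1 n2 : ℕ) (x : X),
        (WithLp.ofLp (((V1 ^ n1) * (V2 ^ n2))
            (WithLp.toLp 2 (x, 0) : WithLp 2 (X × lp (fun _ : ℕ => WithLp 2 (X1 × X2)) 2)))).1
          = ((T1 ^ n1) * (T2 ^ n2)) x) := by
  classical
  have hc : ∀ x, T1 (T2 x) = T2 (T1 x) := fun x => by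
    have h := congrArg (fun f => (f : X →L[ℂ] X) x) hcomm
    simpa using h
  have hsq1 : ∀ x : X, 0 ≤ ‖x‖ ^ 2 - ‖T1 x‖ ^ 2 := fun x => by
    have h := T1.le_opNorm x
    have hle : ‖T1 x‖ ≤ ‖x‖ := h.trans (by nlinarith [norm_nonneg x])
    nlinarith [norm_nonneg (T1 x)]
  have hsq2 : ∀ x : X, 0 ≤ ‖x‖ ^ 2 - ‖T2 x‖ ^ 2 := fun x => by
    have h := T2.le_opNorm x
    have hle : ‖T2 x‖ ≤ ‖x‖ := h.trans (by nlinarith [norm_nonneg x])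
    nlinarith [norm_nonneg (T2 x)]
  let K := WithLp 2 (X1 × X2)
  let E1 : X → K := fun x => WithLp.toLp 2 (j1 x, 0)
  let E2 : X → K := fun x => WithLp.toLp 2 (0, j2 x)
  let Φ1 : K → K → K := fun a b => WithLp.toLp 2 (b.fst, (S (WithLp.toLp 2 (a.fst, b.snd))).snd)
  let Φ2 : K → K → K := fun a b => WithLp.toLp 2 ((S (WithLp.toLp 2 (a.fst, b.snd))).fst, a.snd)
  let Φ1' : K → K → K := fun a b => WithLp.toLp 2 ((S.symm (WithLp.toLp 2 (b.fst, a.snd))).fst, b.snd)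
  let Φ2' : K → K → K := fun a b => WithLp.toLp 2 (a.fst, (S.symm (WithLp.toLp 2 (b.fst, a.snd))).snd)
  have hKn : ∀ u : K, ‖u‖ ^ 2 = ‖u.fst‖ ^ 2 + ‖u.snd‖ ^ 2 := fun u =>
    WithLp.prod_norm_sq_eq_of_L2 u
  have hE1add : ∀ x y, E1 (x + y) = E1 x + E1 y := fun x y => by
    show (WithLp.toLp 2 (j1 (x + y), 0) : K) = _
    rw [map_add]
    exact congrArg (WithLp.toLp 2) (Prod.ext rfl (zero_add (0 : X2)).symm)
  have hE2add : ∀ x y, E2 (x + y) = E2 x + E2 y := fun x y => by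
    show (WithLp.toLp 2 (0, j2 (x + y)) : K) = _
    rw [map_add]
    exact congrArg (WithLp.toLp 2) (Prod.ext (zero_add (0 : X1)).symm rfl)
  have hE1smul : ∀ (c : ℂ) (x : X), E1 (c • x) = c • E1 x := fun c x => by
    show (WithLp.toLp 2 (j1 (c • x), 0) : K) = _
    rw [map_smul]
    exact congrArg (WithLp.toLp 2) (Prod.ext rfl (smul_zero c).symm)
  have hE2smul : ∀ (c : ℂ) (x : X), E2 (c • x) = c • E2 x := fun c x => by
    show (WithLp.toLp 2 (0, j2 (c • x)) : K) = _
    rw [map_smul]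
    exact congrArg (WithLp.toLp 2) (Prod.ext (smul_zero c).symm rfl)
  have hE1n : ∀ x, ‖E1 x‖ ^ 2 = ‖x‖ ^ 2 - ‖T1 x‖ ^ 2 := fun x => by
    rw [hKn]
    show ‖j1 x‖ ^ 2 + ‖(0 : X2)‖ ^ 2 = _
    rw [norm_zero, hj1 x, Real.sq_sqrt (hsq1 x)]
    ring
  have hE2n : ∀ x, ‖E2 x‖ ^ 2 = ‖x‖ ^ 2 - ‖T2 x‖ ^ 2 := fun x => by
    rw [hKn]
    show ‖(0 : X1)‖ ^ 2 + ‖j2 x‖ ^ 2 = _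
    rw [norm_zero, hj2 x, Real.sq_sqrt (hsq2 x)]
    ring
  have hΦ1add : ∀ a b a' b' : K, Φ1 (a + a') (b + b') = Φ1 a b + Φ1 a' b' := by
    intro a b a' b'
    show WithLp.toLp 2 ((b + b').fst, (S (WithLp.toLp 2 ((a + a').fst, (b + b').snd))).snd) = _
    have h : (WithLp.toLp 2 ((a + a').fst, (b + b').snd) : K) = (WithLp.toLp 2 (a.fst, b.snd) : K) + (WithLp.toLp 2 (a'.fst, b'.snd) : K) := rfl
    rw [h, map_add]
    rfl
  have hΦ2add : ∀ a b a' b' : K, Φ2 (a + a') (b + b') = Φ2 a b + Φ2 a' b' := by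
    intro a b a' b'
    show WithLp.toLp 2 ((S (WithLp.toLp 2 ((a + a').fst, (b + b').snd))).fst, (a + a').snd) = _
    have h : (WithLp.toLp 2 ((a + a').fst, (b + b').snd) : K) = (WithLp.toLp 2 (a.fst, b.snd) : K) + (WithLp.toLp 2 (a'.fst, b'.snd) : K) := rfl
    rw [h, map_add]
    rfl
  have hΦ1smul : ∀ (c : ℂ) (a b : K), Φ1 (c • a) (c • b) = c • Φ1 a b := by
    intro c a b
    show (WithLp.toLp 2 ((c • b).fst, (S (WithLp.toLp 2 ((c • a).fst, (c • b).snd))).snd) : K) = _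
    have h : (WithLp.toLp 2 ((c • a).fst, (c • b).snd) : K) = c • (WithLp.toLp 2 (a.fst, b.snd) : K) := rfl
    rw [h, map_smul]
    rfl
  have hΦ2smul : ∀ (c : ℂ) (a b : K), Φ2 (c • a) (c • b) = c • Φ2 a b := by
    intro c a b
    show (WithLp.toLp 2 ((S (WithLp.toLp 2 ((c • a).fst, (c • b).snd))).fst, (c • a).snd) : K) = _
    have h : (WithLp.toLp 2 ((c • a).fst, (c • b).snd) : K) = c • (WithLp.toLp 2 (a.fst, b.snd) : K) := rfl
    rw [h, map_smul]
    rfl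
  have hΦ1'add : ∀ a b a' b' : K, Φ1' (a + a') (b + b') = Φ1' a b + Φ1' a' b' := by
    intro a b a' b'
    show (WithLp.toLp 2 ((S.symm (WithLp.toLp 2 ((b + b').fst, (a + a').snd))).fst, (b + b').snd) : K) = _
    have h : (WithLp.toLp 2 ((b + b').fst, (a + a').snd) : K) = (WithLp.toLp 2 (b.fst, a.snd) : K) + (WithLp.toLp 2 (b'.fst, a'.snd) : K) := rfl
    rw [h, map_add]
    rfl
  have hΦ2'add : ∀ a b a' b' : K, Φ2' (a + a') (b + b') = Φ2' a b + Φ2' a' b' := by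
    intro a b a' b'
    show (WithLp.toLp 2 ((a + a').fst, (S.symm (WithLp.toLp 2 ((b + b').fst, (a + a').snd))).snd) : K) = _
    have h : (WithLp.toLp 2 ((b + b').fst, (a + a').snd) : K) = (WithLp.toLp 2 (b.fst, a.snd) : K) + (WithLp.toLp 2 (b'.fst, a'.snd) : K) := rfl
    rw [h, map_add]
    rfl
  have hΦ1'smul : ∀ (c : ℂ) (a b : K), Φ1' (c • a) (c • b) = c • Φ1' a b := by
    intro c a b
    show (WithLp.toLp 2 ((S.symm (WithLp.toLp 2 ((c • b).fst, (c • a).snd))).fst, (c • b).snd) : K) = _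
    have h : (WithLp.toLp 2 ((c • b).fst, (c • a).snd) : K) = c • (WithLp.toLp 2 (b.fst, a.snd) : K) := rfl
    rw [h, map_smul]
    rfl
  have hΦ2'smul : ∀ (c : ℂ) (a b : K), Φ2' (c • a) (c • b) = c • Φ2' a b := by
    intro c a b
    show (WithLp.toLp 2 ((c • a).fst, (S.symm (WithLp.toLp 2 ((c • b).fst, (c • a).snd))).snd) : K) = _
    have h : (WithLp.toLp 2 ((c • b).fst, (c • a).snd) : K) = c • (WithLp.toLp 2 (b.fst, a.snd) : K) := rfl
    rw [h, map_smul]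
    rfl
  have hΦn : ∀ a b : K, ‖Φ1 a b‖ ^ 2 + ‖Φ2 a b‖ ^ 2 = ‖a‖ ^ 2 + ‖b‖ ^ 2 := by
    intro a b
    let w : K := WithLp.toLp 2 (a.fst, b.snd)
    have h1 : ‖Φ1 a b‖ ^ 2 = ‖b.fst‖ ^ 2 + ‖(S w).snd‖ ^ 2 := hKn _
    have h2 : ‖Φ2 a b‖ ^ 2 = ‖(S w).fst‖ ^ 2 + ‖a.snd‖ ^ 2 := hKn _
    have h3 : ‖S w‖ ^ 2 = ‖(S w).fst‖ ^ 2 + ‖(S w).snd‖ ^ 2 := hKn _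
    have h4 : ‖S w‖ = ‖w‖ := S.norm_map _
    have h5 : ‖w‖ ^ 2 = ‖a.fst‖ ^ 2 + ‖b.snd‖ ^ 2 := hKn _
    have h6 : ‖S w‖ ^ 2 = ‖a.fst‖ ^ 2 + ‖b.snd‖ ^ 2 := by rw [h4, h5]
    rw [h1, h2, hKn a, hKn b]
    linarith [h3, h6]
  have hΦ'n : ∀ a b : K, ‖Φ1' a b‖ ^ 2 + ‖Φ2' a b‖ ^ 2 = ‖a‖ ^ 2 + ‖b‖ ^ 2 := by
    intro a b
    let w : K := WithLp.toLp 2 (b.fst, a.snd)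
    have h1 : ‖Φ1' a b‖ ^ 2 = ‖(S.symm w).fst‖ ^ 2 + ‖b.snd‖ ^ 2 := hKn _
    have h2 : ‖Φ2' a b‖ ^ 2 = ‖a.fst‖ ^ 2 + ‖(S.symm w).snd‖ ^ 2 := hKn _
    have h3 : ‖S.symm w‖ ^ 2 = ‖(S.symm w).fst‖ ^ 2 + ‖(S.symm w).snd‖ ^ 2 := hKn _
    have h4 : ‖S.symm w‖ = ‖w‖ := S.symm.norm_map _
    have h5 : ‖w‖ ^ 2 = ‖b.fst‖ ^ 2 + ‖a.snd‖ ^ 2 := hKn _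
    have h6 : ‖S.symm w‖ ^ 2 = ‖b.fst‖ ^ 2 + ‖a.snd‖ ^ 2 := by rw [h4, h5]
    rw [h1, h2, hKn a, hKn b]
    linarith [h3, h6]
  have hinv1 : ∀ a b : K, Φ1' (Φ1 a b) (Φ2 a b) = a := by
    intro a b
    show (WithLp.toLp 2 ((S.symm (S (WithLp.toLp 2 (a.fst, b.snd) : K))).fst, a.snd) : K) = a
    rw [S.symm_apply_apply]
    rfl
  have hinv2 : ∀ a b : K, Φ2' (Φ1 a b) (Φ2 a b) = b := by
    intro a b
    show (WithLp.toLp 2 (b.fst, (S.symm (S (WithLp.toLp 2 (a.fst, b.snd) : K))).snd) : K) = b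
    rw [S.symm_apply_apply]
    rfl
  have hinv1' : ∀ a b : K, Φ1 (Φ1' a b) (Φ2' a b) = a := by
    intro a b
    show (WithLp.toLp 2 (a.fst, (S (S.symm (WithLp.toLp 2 (b.fst, a.snd) : K))).snd) : K) = a
    rw [S.apply_symm_apply]
    rfl
  have hinv2' : ∀ a b : K, Φ2 (Φ1' a b) (Φ2' a b) = b := by
    intro a b
    show (WithLp.toLp 2 ((S (S.symm (WithLp.toLp 2 (b.fst, a.snd) : K))).fst, b.snd) : K) = b
    rw [S.apply_symm_apply]
    rfl
  have hkey1 : ∀ x, Φ1 (E1 (T2 x)) (E2 x) = E2 (T1 x) := by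
    intro x
    show (WithLp.toLp 2 (0, (S (WithLp.toLp 2 (j1 (T2 x), j2 x) : K)).snd) : K) = E2 (T1 x)
    rw [hS x]
    rfl
  have hkey2 : ∀ x, Φ2 (E1 (T2 x)) (E2 x) = E1 x := by
    intro x
    show (WithLp.toLp 2 ((S (WithLp.toLp 2 (j1 (T2 x), j2 x) : K)).fst, 0) : K) = E1 x
    rw [hS x]
    rfl
  exact AndoAux.ando_aux X T1 T2 hc E1 E2 hE1add hE1smul hE2add hE2smul hE1n hE2n
    Φ1 Φ2 Φ1' Φ2' hΦ1add hΦ2add hΦ1smul hΦ2smul hΦ1'add hΦ2'add hΦ1'smul hΦ2'smul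
    hΦn hΦ'n hinv1 hinv2 hinv1' hinv2' hkey1 hkey2
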